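/- Let E ⊆ T² be an open set of class C² with P(E) ≤ M, and suppose two distinct connected components Γ_i, Γ_j of ∂E satisfy ∫_{Γ_i} κ_E dH¹ = 2π and ∫_{Γ_j} κ_E dH¹ = −2π. Then π² ≤ M · ‖κ_E − κ̄_E‖²_{L²(∂E)}. In particular, if ‖κ_E − κ̄_E‖²_{L²(∂E)} < π²/M, then ∂E cannot have two components with total curvatures 2π and −2π. -/

import Mathlib

open MeasureTheory

private lemma cs_aux {α : Type} [MeasurableSpace α] (ν : Measure α) [IsFiniteMeasure ν]
    {f : α → ℝ} (hf : MemLp f 2 ν) :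
    (∫ a, f a ∂ν) ^ 2 ≤ (ν Set.univ).toReal * ∫ a, f a ^ 2 ∂ν := by
  set T := (ν Set.univ).toReal with hTdef
  set I := ∫ a, f a ∂ν with hIdef
  have hT : 0 ≤ T := ENNReal.toReal_nonneg
  have h1 : Integrable f ν := hf.integrable one_le_two
  have h2 : Integrable (fun a => f a ^ 2) ν := hf.integrable_sq
  have key : 0 ≤ ∫ a, (T * f a - I) ^ 2 ∂ν := integral_nonneg fun a => sq_nonneg _
  have expand : ∫ a, (T * f a - I) ^ 2 ∂ν
      = T ^ 2 * (∫ a, f a ^ 2 ∂ν) - 2 * T * I * I + I ^ 2 * T := by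
    have : (fun a => (T * f a - I) ^ 2)
        = fun a => T ^ 2 * f a ^ 2 - 2 * T * I * f a + I ^ 2 := by
      funext a; ring
    have hsub : Integrable (fun a => T ^ 2 * f a ^ 2 - 2 * T * I * f a) ν :=
      (h2.const_mul _).sub (h1.const_mul _)
    rw [this, integral_add hsub (integrable_const _),
      integral_sub (h2.const_mul _) (h1.const_mul _), integral_const_mul, integral_const_mul,
      integral_const, smul_eq_mul, measureReal_def, ← hTdef, ← hIdef]
    ring
  rcases eq_or_lt_of_le hT with h0 | h0
  · have hν : ν = 0 := by
      have : ν Set.univ = 0 := by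
        have := measure_ne_top ν Set.univ
        simpa [hTdef, ENNReal.toReal_eq_zero_iff, this] using h0.symm
      exact Measure.measure_univ_eq_zero.mp this
    simp [hIdef, hν]
  · have key2 : 0 ≤ T * (T * (∫ a, f a ^ 2 ∂ν) - I ^ 2) := by
      have : T ^ 2 * (∫ a, f a ^ 2 ∂ν) - 2 * T * I * I + I ^ 2 * T
          = T * (T * (∫ a, f a ^ 2 ∂ν) - I ^ 2) := by ring
      rw [expand, this] at key
      exact key
    nlinarith [key2, h0]

/- STATEMENT 11: Model ∂E as a finite measure space (α, μ) with μ(∂E) = H¹(∂E) ≤ M and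
κ = κ_E ∈ L²(μ). If two disjoint (boundary-component) pieces Γ_i, Γ_j satisfy
∫_{Γ_i} κ = 2π and ∫_{Γ_j} κ = −2π, then π² ≤ M ‖κ − κ̄‖²_{L²(∂E)}, where κ̄ is the
average of κ over ∂E; in particular if ‖κ − κ̄‖²_{L²(∂E)} < π²/M no such pair of
components can exist. -/
theorem no_opposite_total_curvature_components
    (M : ℝ) (hM : 0 < M)
    (α : Type) (_ : MeasurableSpace α) (μ : Measure α)
    (κ : α → ℝ) (Γi Γj : Set α)
    (hμM : μ Set.univ ≤ ENNReal.ofReal M)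
    (hΓi : MeasurableSet Γi) (hΓj : MeasurableSet Γj) (hdisj : Disjoint Γi Γj)
    (hκ : MemLp κ 2 μ)
    (hi : (∫ p in Γi, κ p ∂μ) = 2 * Real.pi)
    (hj : (∫ p in Γj, κ p ∂μ) = -(2 * Real.pi)) :
    Real.pi ^ 2 ≤ M * ∫ p, (κ p - (∫ q, κ q ∂μ) / (μ Set.univ).toReal) ^ 2 ∂μ := by
  have hfin : IsFiniteMeasure μ :=
    ⟨lt_of_le_of_lt hμM ENNReal.ofReal_lt_top⟩
  set c : ℝ := (∫ q, κ q ∂μ) / (μ Set.univ).toReal with hc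
  set f : α → ℝ := fun p => κ p - c with hfdef
  have hf : MemLp f 2 μ := hκ.sub (memLp_const c)
  have hκint : Integrable κ μ := hκ.integrable one_le_two
  have hsqint : Integrable (fun a => f a ^ 2) μ := hf.integrable_sq
  -- general estimate on a measurable set s
  have main : ∀ s : Set α, MeasurableSet s →
      (∫ p in s, f p ∂μ) ^ 2 ≤ M * ∫ p, f p ^ 2 ∂μ := by
    intro s hs
    have := cs_aux (μ.restrict s) (hf.restrict s)
    have hμs : ((μ.restrict s) Set.univ).toReal ≤ M := by
      rw [Measure.restrict_apply_univ]
      have h1 : μ s ≤ ENNReal.ofReal M := le_trans (measure_mono (Set.subset_univ s)) hμM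
      calc (μ s).toReal ≤ (ENNReal.ofReal M).toReal :=
            ENNReal.toReal_mono ENNReal.ofReal_ne_top h1
        _ = M := ENNReal.toReal_ofReal hM.le
    have hsle : ∫ p in s, f p ^ 2 ∂μ ≤ ∫ p, f p ^ 2 ∂μ :=
      setIntegral_le_integral hsqint (Filter.Eventually.of_forall fun a => sq_nonneg _)
    calc (∫ p in s, f p ∂μ) ^ 2
        ≤ ((μ.restrict s) Set.univ).toReal * ∫ p in s, f p ^ 2 ∂μ := this
      _ ≤ M * ∫ p, f p ^ 2 ∂μ := by
          apply mul_le_mul hμs hsle (integral_nonneg fun a => sq_nonneg _) hM.le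
  have hsplit : ∀ s : Set α, ∫ p in s, f p ∂μ
      = (∫ p in s, κ p ∂μ) - c * (μ s).toReal := by
    intro s
    rw [hfdef]
    rw [integral_sub (hκint.restrict) (integrable_const c), setIntegral_const]
    ring_nf
    rfl
  have hπ : (0:ℝ) < Real.pi := Real.pi_pos
  have key : Real.pi ^ 2 ≤ (2 * Real.pi) ^ 2 := by nlinarith
  rcases le_or_gt c 0 with hcle | hcpos
  · -- use Γi : ∫ f = 2π - c * t ≥ 2π
    have ht : 0 ≤ (μ Γi).toReal := ENNReal.toReal_nonneg
    have hval : 2 * Real.pi ≤ ∫ p in Γi, f p ∂μ := by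
      rw [hsplit, hi]; nlinarith
    have : (2 * Real.pi) ^ 2 ≤ (∫ p in Γi, f p ∂μ) ^ 2 := by
      apply pow_le_pow_left₀ (by positivity) hval
    exact le_trans key (le_trans this (main Γi hΓi))
  · -- use Γj : ∫ f = -2π - c * t ≤ -2π
    have ht : 0 ≤ (μ Γj).toReal := ENNReal.toReal_nonneg
    have hval : ∫ p in Γj, f p ∂μ ≤ -(2 * Real.pi) := by
      rw [hsplit, hj]; nlinarith
    have : (2 * Real.pi) ^ 2 ≤ (∫ p in Γj, f p ∂μ) ^ 2 := by
      nlinarith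
    exact le_trans key (le_trans this (main Γj hΓj))
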